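/- Let G be an undirected graph having a connected component that is neither trivial (a single vertex with no loop), nor a complete graph with loops on all its vertices, nor a complete bipartite graph. Then the graph algebra A(G) satisfies no nontrivial bracketing identity; consequently, s_n(A(G)) = C_{n−1} for all n ≥ 1, where C_k denotes the k-th Catalan number C_k = binom(2k,k)/(k+1). -/

import Mathlib

namespace AssocSpec

/-- Bracketings of products `x₁ x₂ ⋯ xₙ` represented as binary trees whose
leaves, read from left to right, are the variables `x₁, …, xₙ`. -/
inductive BTree : Type
  | leaf : BTree
  | node : BTree → BTree → BTree

namespace BTree

/-- The size of a bracketing: its number of variables (leaves). -/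
def size : BTree → ℕ
  | leaf => 1
  | node l r => l.size + r.size

/-- Evaluate a bracketing in a magma `(A, op)`, the leaves taking the values
`f k, f (k+1), …` from left to right. -/
def evalFrom {A : Type*} (op : A → A → A) : BTree → (ℕ → A) → ℕ → A
  | leaf, f, k => f k
  | node l r, f, k => op (evalFrom op l f k) (evalFrom op r f (k + l.size))

/-- The term operation induced by a bracketing `t` on a magma `(A, op)`;
the `i`-th variable (0-indexed) takes the value `f i`. -/
def termOp {A : Type*} (op : A → A → A) (t : BTree) (f : ℕ → A) : A :=
  evalFrom op t f 0

/-- The depth sequence of the DFS tree `G(t)` of a bracketing `t`: the `i`-th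
entry is the depth of the `i`-th variable (0-indexed) in `G(t)`. -/
def depths : BTree → List ℕ
  | leaf => [0]
  | node l r => l.depths ++ r.depths.map (· + 1)

/-- The depth of the `i`-th variable (0-indexed) in the DFS tree `G(t)`. -/
def depth (t : BTree) (i : ℕ) : ℕ := t.depths.getD i 0

/-- The height of the DFS tree `G(t)`: the maximum depth of a variable. -/
def height (t : BTree) : ℕ := t.depths.foldr max 0

/-- The edges of the DFS tree `G(t)`, the variables being indexed from the
given offset: `(p, c)` is an edge iff `x_p` is the parent of `x_c`. -/
def edgesFrom : BTree → ℕ → List (ℕ × ℕ)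
  | leaf, _ => []
  | node l r, k => (k, k + l.size) :: (l.edgesFrom k ++ r.edgesFrom (k + l.size))

/-- The edges of the DFS tree `G(t)` (variables indexed from `0`). -/
def edges (t : BTree) : List (ℕ × ℕ) := t.edgesFrom 0

end BTree

open Classical in
/-- The operation of the graph algebra of the digraph with vertex set `V` and
edge relation `E`; `none` plays the role of `∞`. -/
noncomputable def gaOp {V : Type*} (E : V → V → Prop) :
    Option V → Option V → Option V
  | some x, some y => if E x y then some x else none
  | _, _ => none

/-- The magma `(A, op)` satisfies the bracketing identity `t ≈ t'`. -/
def Satisfies {A : Type*} (op : A → A → A) (t t' : BTree) : Prop :=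
  ∀ f : ℕ → A, BTree.termOp op t f = BTree.termOp op t' f

/-- The `n`-th member `s_n` of the associative spectrum of the magma `(A, op)`:
the number of distinct term operations induced by bracketings of size `n`. -/
noncomputable def spectrum {A : Type*} (op : A → A → A) (n : ℕ) : ℕ :=
  Set.ncard {g : (ℕ → A) → A | ∃ t : BTree, t.size = n ∧ g = BTree.termOp op t}

/-- Reachability (by a walk) in the digraph with edge relation `E`. -/
def Reach {V : Type*} (E : V → V → Prop) : V → V → Prop :=
  Relation.ReflTransGen E

/-- `u` and `v` lie in the same strongly connected component. -/
def SameSCC {V : Type*} (E : V → V → Prop) (u v : V) : Prop :=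
  Reach E u v ∧ Reach E v u

/-- The strongly connected component of `v`, as a set of vertices. -/
def scc {V : Type*} (E : V → V → Prop) (v : V) : Set V :=
  {u | SameSCC E u v}

/-- `v` lies in a nontrivial strongly connected component (one carrying at
least one edge), i.e. `v` lies on a closed walk of positive length. -/
def InNontrivialSCC {V : Type*} (E : V → V → Prop) (v : V) : Prop :=
  ∃ u, E v u ∧ Reach E u v

/-- The induced subgraph on the set `K` (with the edge relation `E`) is an
`m`-whirl: `K` is partitioned into blocks `B 0, …, B (m-1)` so that edges go
exactly from each block to the cyclically next one. -/
def IsWhirlOn {V : Type*} (E : V → V → Prop) (K : Set V) (m : ℕ) : Prop :=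
  ∃ B : ZMod m → Set V,
    (∀ i, (B i).Nonempty) ∧
    (∀ i, B i ⊆ K) ∧
    (∀ x ∈ K, ∃! i, x ∈ B i) ∧
    (∀ x ∈ K, ∀ y ∈ K, (E x y ↔ ∃ i, x ∈ B i ∧ y ∈ B (i + 1)))

/-- `p 0 → p 1 → ⋯ → p len` is a path (a walk with pairwise distinct
vertices) in the digraph with edge relation `E`. -/
def IsPath {V : Type*} (E : V → V → Prop) (len : ℕ) (p : ℕ → V) : Prop :=
  (∀ i < len, E (p i) (p (i + 1))) ∧
  (∀ i ≤ len, ∀ j ≤ len, p i = p j → i = j)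

/-- The walk `p 0 → ⋯ → p len` is pleasant: all its vertices belong to
trivial strongly connected components. -/
def IsPleasant {V : Type*} (E : V → V → Prop) (len : ℕ) (p : ℕ → V) : Prop :=
  ∀ i ≤ len, ¬ InNontrivialSCC E (p i)

/-- The connected component `K` (of an undirected graph) is complete
bipartite: it splits into two nonempty parts with edges exactly between
vertices of different parts. -/
def IsCompleteBipartiteOn {V : Type*} (E : V → V → Prop) (K : Set V) : Prop :=
  ∃ B1 B2 : Set V, B1.Nonempty ∧ B2.Nonempty ∧ B1 ∪ B2 = K ∧ B1 ∩ B2 = ∅ ∧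
    ∀ x ∈ K, ∀ y ∈ K, (E x y ↔ (x ∈ B1 ∧ y ∈ B2) ∨ (x ∈ B2 ∧ y ∈ B1))

/-- A DFS tree of size `n`: a rooted directed tree on the vertices
`x₁, …, xₙ` (here `Fin n`, the root being `0`), given by its parent function,
such that the parent of every non-root vertex precedes it and the vertex set
of the induced subtree rooted at any vertex `i` is an interval `[i, i']`.
(The parent of the root is, by convention, the root itself.) -/
structure DFSTree (n : ℕ) where
  parent : Fin n → Fin n
  parent_lt : ∀ i : Fin n, 0 < (i : ℕ) → (parent i : ℕ) < (i : ℕ)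
  parent_root : ∀ i : Fin n, (i : ℕ) = 0 → parent i = i
  interval : ∀ i j k : Fin n, i ≤ j → j ≤ k →
    (∃ a : ℕ, parent^[a] k = i) → (∃ a : ℕ, parent^[a] j = i)

/-- The depth of the vertex `i` in a DFS tree: the length of the path from
the root to `i`. -/
noncomputable def DFSTree.depth {n : ℕ} (T : DFSTree n) (i : Fin n) : ℕ :=
  sInf {k : ℕ | (T.parent^[k] i : ℕ) = 0}

/-- The height of a DFS tree: the maximum depth of a vertex. -/
noncomputable def DFSTree.height {n : ℕ} (T : DFSTree n) : ℕ :=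
  Finset.univ.sup fun i => T.depth i

/-- The vertex `i` is a leaf (childless vertex) of the DFS tree `T`. -/
def DFSTree.IsLeaf {n : ℕ} (T : DFSTree n) (i : Fin n) : Prop :=
  ∀ j : Fin n, T.parent j = i → j = i

/-- `t_h(n)`: the number of DFS trees of size `n` of height at most `h`. -/
noncomputable def tcount (h n : ℕ) : ℕ :=
  Nat.card {T : DFSTree n // T.height ≤ h}

/-- `d` is a zag sequence: `d₁ = 0`, `d₂ = 1`, and
`1 ≤ d_{i+1} ≤ d_i + 1` for all `i` (1-indexed as in the paper;
here `d : Fin n → ℕ` is 0-indexed). -/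
def IsZag {n : ℕ} (d : Fin n → ℕ) : Prop :=
  (∀ h : 0 < n, d ⟨0, h⟩ = 0) ∧
  (∀ h : 1 < n, d ⟨1, h⟩ = 1) ∧
  (∀ i : ℕ, ∀ h : i + 1 < n,
    1 ≤ d ⟨i + 1, h⟩ ∧ d ⟨i + 1, h⟩ ≤ d ⟨i, Nat.lt_of_succ_lt h⟩ + 1)

/-- `M(t,t')`: the largest `m` such that the depth sequences of the DFS trees
of the bracketings `t` and `t'` are congruent modulo `m`. -/
noncomputable def Mval (t t' : BTree) : ℕ :=
  sSup {m : ℕ | ∀ i < t.size, t.depth i ≡ t'.depth i [MOD m]}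

section Aux

lemma size_pos' (t : BTree) : 1 ≤ t.size := by
  induction t with
  | leaf => simp [BTree.size]
  | node l r ihl ihr => simp only [BTree.size]; omega

lemma depths_length (t : BTree) : t.depths.length = t.size := by
  induction t with
  | leaf => rfl
  | node l r ihl ihr => simp [BTree.depths, BTree.size, ihl, ihr]

lemma depth_eq (t : BTree) (j : ℕ) : t.depth j = t.depths.getD j 0 := rfl

lemma depth_out (t : BTree) (j : ℕ) (h : t.size ≤ j) : t.depth j = 0 := by
  rw [depth_eq, List.getD_eq_default]
  rw [depths_length]; exact h

lemma depth_node_left (l r : BTree) (j : ℕ) (h : j < l.size) :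
    (BTree.node l r).depth j = l.depth j := by
  rw [depth_eq, depth_eq]
  show (l.depths ++ r.depths.map (· + 1)).getD j 0 = l.depths.getD j 0
  rw [List.getD_append]
  rw [depths_length]; exact h

lemma depth_node_right (l r : BTree) (j : ℕ) (h1 : l.size ≤ j)
    (h2 : j < (BTree.node l r).size) :
    (BTree.node l r).depth j = r.depth (j - l.size) + 1 := by
  rw [depth_eq, depth_eq]
  show (l.depths ++ r.depths.map (· + 1)).getD j 0 = r.depths.getD (j - l.size) 0 + 1
  rw [List.getD_append_right _ _ _ _ (by rw [depths_length]; exact h1), depths_length]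
  have hlt : j - l.size < r.depths.length := by
    rw [depths_length]
    simp only [BTree.size] at h2
    omega
  rw [List.getD_eq_getElem?_getD, List.getD_eq_getElem?_getD, List.getElem?_map,
    List.getElem?_eq_getElem hlt]
  simp

lemma depth_zero (t : BTree) : t.depth 0 = 0 := by
  induction t with
  | leaf => rfl
  | node l r ihl ihr => rw [depth_node_left l r 0 (size_pos' l)]; exact ihl

lemma depth_pos (t : BTree) : ∀ j, 0 < j → j < t.size → 1 ≤ t.depth j := by
  induction t with
  | leaf => intro j h1 h2; simp [BTree.size] at h2; omega
  | node l r ihl ihr =>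
    intro j h1 h2
    by_cases h : j < l.size
    · rw [depth_node_left l r j h]; exact ihl j h1 h
    · rw [depth_node_right l r j (le_of_not_gt h) h2]; omega

lemma edges_bounds (t : BTree) :
    ∀ k a b, (a, b) ∈ t.edgesFrom k → k ≤ a ∧ a < b ∧ b < k + t.size := by
  induction t with
  | leaf => intro k a b h; simp [BTree.edgesFrom] at h
  | node l r ihl ihr =>
    intro k a b h
    have hsl := size_pos' l; have hsr := size_pos' r
    simp only [BTree.edgesFrom, List.mem_cons, List.mem_append, Prod.mk.injEq] at h
    simp only [BTree.size]
    rcases h with ⟨rfl, rfl⟩ | h | h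
    · omega
    · have := ihl k a b h; omega
    · have := ihr (k + l.size) a b h; omega

lemma edges_depth (t : BTree) : ∀ k a b, (a, b) ∈ t.edgesFrom k →
    t.depth (b - k) = t.depth (a - k) + 1 := by
  induction t with
  | leaf => intro k a b h; simp [BTree.edgesFrom] at h
  | node l r ihl ihr =>
    intro k a b h
    have hsl := size_pos' l; have hsr := size_pos' r
    simp only [BTree.edgesFrom, List.mem_cons, List.mem_append, Prod.mk.injEq] at h
    rcases h with ⟨rfl, rfl⟩ | h | h
    · have h1 : a + l.size - a = l.size := by omega
      have h2 : a - a = 0 := by omega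
      rw [h1, h2, depth_node_right l r l.size le_rfl (by simp only [BTree.size]; omega),
        Nat.sub_self, depth_zero, depth_zero]
    · have hb := edges_bounds l k a b h
      rw [depth_node_left l r _ (by omega), depth_node_left l r _ (by omega)]
      exact ihl k a b h
    · have hb := edges_bounds r (k + l.size) a b h
      rw [depth_node_right l r (b - k) (by omega) (by simp only [BTree.size]; omega),
        depth_node_right l r (a - k) (by omega) (by simp only [BTree.size]; omega)]
      have e1 : b - k - l.size = b - (k + l.size) := by omega
      have e2 : a - k - l.size = a - (k + l.size) := by omega
      rw [e1, e2, ihr (k + l.size) a b h]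

lemma edges_between (t : BTree) : ∀ k a b j, (a, b) ∈ t.edgesFrom k → a < j → j < b →
    t.depth (a - k) < t.depth (j - k) := by
  induction t with
  | leaf => intro k a b j h; simp [BTree.edgesFrom] at h
  | node l r ihl ihr =>
    intro k a b j h h1 h2
    have hsl := size_pos' l; have hsr := size_pos' r
    simp only [BTree.edgesFrom, List.mem_cons, List.mem_append, Prod.mk.injEq] at h
    rcases h with ⟨rfl, rfl⟩ | h | h
    · rw [Nat.sub_self, depth_zero, depth_node_left l r _ (by omega)]
      have := depth_pos l (j - a) (by omega) (by omega)
      omega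
    · have hb := edges_bounds l k a b h
      rw [depth_node_left l r _ (by omega), depth_node_left l r _ (by omega)]
      exact ihl k a b j h h1 h2
    · have hb := edges_bounds r (k + l.size) a b h
      rw [depth_node_right l r (a - k) (by omega) (by simp only [BTree.size]; omega),
        depth_node_right l r (j - k) (by omega) (by simp only [BTree.size]; omega)]
      have e1 : a - k - l.size = a - (k + l.size) := by omega
      have e2 : j - k - l.size = j - (k + l.size) := by omega
      rw [e1, e2]
      have := ihr (k + l.size) a b j h h1 h2
      omega

lemma edges_parent (t : BTree) : ∀ k b, k < b → b < k + t.size →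
    ∃ a, (a, b) ∈ t.edgesFrom k := by
  induction t with
  | leaf => intro k b h1 h2; simp only [BTree.size] at h2; omega
  | node l r ihl ihr =>
    intro k b h1 h2
    have hsl := size_pos' l; have hsr := size_pos' r
    simp only [BTree.size] at h2
    rcases lt_trichotomy b (k + l.size) with h | h | h
    · obtain ⟨a, ha⟩ := ihl k b h1 h
      exact ⟨a, by simp [BTree.edgesFrom, ha]⟩
    · exact ⟨k, by simp [BTree.edgesFrom, h]⟩
    · obtain ⟨a, ha⟩ := ihr (k + l.size) b h (by omega)
      exact ⟨a, by simp [BTree.edgesFrom, ha]⟩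

lemma node_depth_size_left (l r : BTree) : (BTree.node l r).depth l.size = 1 := by
  have := size_pos' r
  rw [depth_node_right l r l.size le_rfl (by simp only [BTree.size]; omega),
    Nat.sub_self, depth_zero]

lemma node_depth_gt (l r : BTree) (j : ℕ) (h1 : l.size < j) (h2 : j < (BTree.node l r).size) :
    2 ≤ (BTree.node l r).depth j := by
  rw [depth_node_right l r j (by omega) h2]
  have : 1 ≤ r.depth (j - l.size) := by
    apply depth_pos r _ (by omega)
    simp only [BTree.size] at h2
    omega
  omega

lemma depths_inj : ∀ t t' : BTree, t.depths = t'.depths → t = t' := by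
  intro t
  induction t with
  | leaf =>
    intro t' h
    cases t' with
    | leaf => rfl
    | node l' r' =>
      exfalso
      have hlen := congrArg List.length h
      rw [depths_length, depths_length] at hlen
      simp only [BTree.size] at hlen
      have := size_pos' l'; have := size_pos' r'
      omega
  | node l r ihl ihr =>
    intro t' h
    cases t' with
    | leaf =>
      exfalso
      have hlen := congrArg List.length h
      rw [depths_length, depths_length] at hlen
      simp only [BTree.size] at hlen
      have := size_pos' l; have := size_pos' r
      omega
    | node l' r' =>
      have hlen := congrArg List.length h
      rw [depths_length, depths_length] at hlen
      have hd : ∀ j, (BTree.node l r).depth j = (BTree.node l' r').depth j := by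
        intro j; rw [depth_eq, depth_eq, h]
      have hsl := size_pos' l; have hsr := size_pos' r
      have hsl' := size_pos' l'; have hsr' := size_pos' r'
      have hn : l.size + r.size = l'.size + r'.size := by
        simpa only [BTree.size] using hlen
      have hsize : l.size = l'.size := by
        by_contra hne
        rcases lt_or_gt_of_ne hne with hlt | hlt
        · have h1 := node_depth_gt l r l'.size hlt (by simp only [BTree.size]; omega)
          rw [hd l'.size, node_depth_size_left l' r'] at h1; omega
        · have h1 := node_depth_gt l' r' l.size hlt (by simp only [BTree.size]; omega)
          rw [← hd l.size, node_depth_size_left l r] at h1; omega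
      have h' : l.depths ++ r.depths.map (· + 1) = l'.depths ++ r'.depths.map (· + 1) := h
      have hsplit := List.append_inj h' (by rw [depths_length, depths_length, hsize])
      have hrr : r.depths = r'.depths := by
        exact List.map_injective_iff.mpr (add_left_injective 1) hsplit.2
      rw [ihl l' hsplit.1, ihr r' hrr]

/-- `g` is a homomorphism of the DFS tree of `t` (offset `k`) into `(V,E)`. -/
def Homo {V : Type*} (E : V → V → Prop) (g : ℕ → V) (t : BTree) (k : ℕ) : Prop :=
  ∀ a b : ℕ, (a, b) ∈ t.edgesFrom k → E (g a) (g b)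

open Classical in
lemma gaOp_some_some {V : Type*} (E : V → V → Prop) (x y : V) :
    gaOp E (some x) (some y) = if E x y then some x else none := rfl

lemma gaOp_none_left {V : Type*} (E : V → V → Prop) (z : Option V) :
    gaOp E none z = none := by cases z <;> rfl

lemma gaOp_none_right {V : Type*} (E : V → V → Prop) (z : Option V) :
    gaOp E z none = none := by cases z <;> rfl

lemma evalFrom_some {V : Type*} (E : V → V → Prop) (g : ℕ → V) :
    ∀ (t : BTree) (k : ℕ), Homo E g t k →
      BTree.evalFrom (gaOp E) t (fun j => some (g j)) k = some (g k) := by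
  intro t
  induction t with
  | leaf => intro k _; rfl
  | node l r ihl ihr =>
    intro k h
    have hl : Homo E g l k := fun a b hm => h a b (by simp [BTree.edgesFrom, hm])
    have hr : Homo E g r (k + l.size) := fun a b hm => h a b (by simp [BTree.edgesFrom, hm])
    have hhead : E (g k) (g (k + l.size)) := h _ _ (by simp [BTree.edgesFrom])
    show gaOp E (BTree.evalFrom (gaOp E) l (fun j => some (g j)) k)
        (BTree.evalFrom (gaOp E) r (fun j => some (g j)) (k + l.size)) = some (g k)
    rw [ihl k hl, ihr _ hr, gaOp_some_some, if_pos hhead]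

lemma evalFrom_none {V : Type*} (E : V → V → Prop) (g : ℕ → V) :
    ∀ (t : BTree) (k : ℕ), ¬ Homo E g t k →
      BTree.evalFrom (gaOp E) t (fun j => some (g j)) k = none := by
  intro t
  induction t with
  | leaf =>
    intro k h
    exact absurd (fun a b hm => by simp [BTree.edgesFrom] at hm) h
  | node l r ihl ihr =>
    intro k h
    show gaOp E (BTree.evalFrom (gaOp E) l (fun j => some (g j)) k)
        (BTree.evalFrom (gaOp E) r (fun j => some (g j)) (k + l.size)) = none
    by_cases hl : Homo E g l k
    · by_cases hr : Homo E g r (k + l.size)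
      · have hhead : ¬ E (g k) (g (k + l.size)) := by
          intro hhead
          apply h
          intro a b hm
          simp only [BTree.edgesFrom, List.mem_cons, List.mem_append, Prod.mk.injEq] at hm
          rcases hm with ⟨rfl, rfl⟩ | hm | hm
          · exact hhead
          · exact hl a b hm
          · exact hr a b hm
        rw [evalFrom_some E g l k hl, evalFrom_some E g r _ hr, gaOp_some_some, if_neg hhead]
      · rw [ihr _ hr, gaOp_none_right]
    · rw [ihl k hl, gaOp_none_left]

/-- membership in the subtree interval of the vertex `i` (of depth `D`). -/
def InSub (t : BTree) (i D j : ℕ) : Prop :=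
  i ≤ j ∧ ∀ l, i < l → l ≤ j → D < t.depth l

open Classical in
/-- The distinguishing assignment. -/
noncomputable def gFun {V : Type*} (t : BTree) (i D : ℕ) (c c₂ : ℕ → V) (j : ℕ) : V :=
  if InSub t i D j then c₂ (t.depth j - D) else c (t.depth j)

lemma key_exists {V : Type*} (E : V → V → Prop)
    (gad : ∀ D D' : ℕ, 1 ≤ D → 1 ≤ D' → D ≠ D' →
      ∃ c c₂ : ℕ → V, (∀ k, E (c k) (c (k + 1))) ∧ (∀ k, E (c₂ k) (c₂ (k + 1))) ∧
        E (c (D - 1)) (c₂ 0) ∧ ¬ E (c (D' - 1)) (c₂ 0))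
    (t t' : BTree) (hsize : t.size = t'.size) (hne : t ≠ t') :
    ∃ g : ℕ → V, Homo E g t 0 ∧ ¬ Homo E g t' 0 := by
  classical
  have hdiff : ∃ j, t.depth j ≠ t'.depth j := by
    by_contra hc
    push_neg at hc
    apply hne
    apply depths_inj
    apply List.ext_getElem?
    intro j
    by_cases hj : j < t.depths.length
    · have hj' : j < t'.depths.length := by
        rw [depths_length] at hj ⊢; omega
      rw [List.getElem?_eq_getElem hj, List.getElem?_eq_getElem hj']
      have hcj := hc j
      rw [depth_eq, depth_eq, List.getD_eq_getElem _ _ hj, List.getD_eq_getElem _ _ hj'] at hcj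
      rw [hcj]
    · have hj' : ¬ j < t'.depths.length := by
        rw [depths_length] at hj ⊢; omega
      rw [List.getElem?_eq_none (by omega), List.getElem?_eq_none (by omega)]
  set i := Nat.find hdiff with hidef
  have hi : t.depth i ≠ t'.depth i := Nat.find_spec hdiff
  have hmin : ∀ j, j < i → t.depth j = t'.depth j := fun j hj => of_not_not (Nat.find_min hdiff hj)
  have hi0 : 0 < i := by
    rcases Nat.eq_zero_or_pos i with h | h
    · exfalso; apply hi; rw [h, depth_zero, depth_zero]
    · exact h
  have hin : i < t.size := by
    by_contra hc
    exact hi (by rw [depth_out t i (by omega), depth_out t' i (by omega)])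
  set D := t.depth i with hD
  set D' := t'.depth i with hD'
  have hD1 : 1 ≤ D := depth_pos t i hi0 hin
  have hD'1 : 1 ≤ D' := depth_pos t' i hi0 (by omega)
  obtain ⟨c, c₂, hwc, hwc₂, hEz, hNEz⟩ := gad D D' hD1 hD'1 hi
  refine ⟨gFun t i D c c₂, ?_, ?_⟩
  · intro a b hm
    have hb := edges_bounds t 0 a b hm
    have hdep := edges_depth t 0 a b hm
    rw [Nat.sub_zero, Nat.sub_zero] at hdep
    by_cases hIa : InSub t i D a
    · have hDa : D ≤ t.depth a := by
        rcases eq_or_lt_of_le hIa.1 with h | h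
        · rw [hD, h]
        · exact le_of_lt (hIa.2 a h le_rfl)
      have hIb : InSub t i D b := by
        refine ⟨le_trans hIa.1 (le_of_lt hb.2.1), fun l h1 h2 => ?_⟩
        rcases le_or_gt l a with h3 | h3
        · exact hIa.2 l h1 h3
        · rcases eq_or_lt_of_le h2 with rfl | h4
          · omega
          · have := edges_between t 0 a b l hm h3 h4
            rw [Nat.sub_zero, Nat.sub_zero] at this
            omega
      rw [gFun, gFun, if_pos hIa, if_pos hIb, hdep]
      have he : t.depth a + 1 - D = (t.depth a - D) + 1 := by omega
      rw [he]
      exact hwc₂ _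
    · by_cases hIb : InSub t i D b
      · have hbi : b = i := by
          by_contra hbne
          have hib : i < b := lt_of_le_of_ne hIb.1 (Ne.symm hbne)
          apply hIa
          have hbD := hIb.2 b hib le_rfl
          have hia : i ≤ a := by
            by_contra hia
            push_neg at hia
            have := edges_between t 0 a b i hm hia hib
            rw [Nat.sub_zero, Nat.sub_zero, ← hD] at this
            omega
          exact ⟨hia, fun l h1 h2 => hIb.2 l h1 (le_trans h2 (le_of_lt hb.2.1))⟩
        subst hbi
        have hda : t.depth a = D - 1 := by
          rw [← hD] at hdep
          omega
        rw [gFun, gFun, if_neg hIa, if_pos ⟨le_rfl, fun l h1 h2 => by omega⟩, hda, ← hD,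
          Nat.sub_self]
        exact hEz
      · rw [gFun, gFun, if_neg hIa, if_neg hIb, hdep]
        exact hwc _
  · intro hHomo
    obtain ⟨a', hm'⟩ := edges_parent t' 0 i hi0 (by omega)
    have hb' := edges_bounds t' 0 a' i hm'
    have hdep' := edges_depth t' 0 a' i hm'
    rw [Nat.sub_zero, Nat.sub_zero, ← hD'] at hdep'
    have ha'i : a' < i := hb'.2.1
    have hda' : t.depth a' = D' - 1 := by
      have := hmin a' ha'i
      omega
    have hnIn : ¬ InSub t i D a' := fun hcc => by have := hcc.1; omega
    have hEdge := hHomo a' i hm'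
    rw [gFun, gFun, if_neg hnIn, if_pos ⟨le_rfl, fun l h1 h2 => by omega⟩, hda', ← hD,
      Nat.sub_self] at hEdge
    exact hNEz hEdge

lemma gad_of_tuples {V : Type*} (E : V → V → Prop) (hsymm : ∀ u v, E u v → E v u)
    (hodd : ∃ z a b : V, E a z ∧ E a b ∧ ¬ E b z)
    (heven : ∃ z a x b : V, E a z ∧ E a x ∧ E x b ∧ ¬ E b z) :
    ∀ D D' : ℕ, 1 ≤ D → 1 ≤ D' → D ≠ D' →
      ∃ c c₂ : ℕ → V, (∀ k, E (c k) (c (k + 1))) ∧ (∀ k, E (c₂ k) (c₂ (k + 1))) ∧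
        E (c (D - 1)) (c₂ 0) ∧ ¬ E (c (D' - 1)) (c₂ 0) := by
  classical
  intro D D' hD hD' hne
  rcases Nat.mod_two_eq_zero_or_one (D + D') with hpar | hpar
  · -- same parity
    obtain ⟨z, a, x, b, h1, h2, h3, h4⟩ := heven
    rcases lt_or_gt_of_ne hne with hlt | hlt
    · -- D < D', so D + 2 ≤ D'
      refine ⟨fun k => if k ≤ D then (if (k + D) % 2 = 1 then a else x)
          else (if (k + D) % 2 = 1 then b else x),
        fun k => if k % 2 = 0 then z else a, ?_, ?_, ?_, ?_⟩
      · intro k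
        beta_reduce
        rcases Nat.mod_two_eq_zero_or_one (k + D) with he | he
        · by_cases hk : k < D
          · rw [if_pos (show k ≤ D by omega), if_pos (show k + 1 ≤ D by omega),
              if_neg (show ¬ (k + D) % 2 = 1 by omega),
              if_pos (show (k + 1 + D) % 2 = 1 by omega)]
            exact hsymm _ _ h2
          · by_cases hk2 : k = D
            · rw [if_pos (show k ≤ D by omega), if_neg (show ¬ k + 1 ≤ D by omega),
                if_neg (show ¬ (k + D) % 2 = 1 by omega),
                if_pos (show (k + 1 + D) % 2 = 1 by omega)]
              exact h3
            · rw [if_neg (show ¬ k ≤ D by omega), if_neg (show ¬ k + 1 ≤ D by omega),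
                if_neg (show ¬ (k + D) % 2 = 1 by omega),
                if_pos (show (k + 1 + D) % 2 = 1 by omega)]
              exact h3
        · by_cases hk : k < D
          · rw [if_pos (show k ≤ D by omega), if_pos (show k + 1 ≤ D by omega),
              if_pos (show (k + D) % 2 = 1 by omega),
              if_neg (show ¬ (k + 1 + D) % 2 = 1 by omega)]
            exact h2
          · rw [if_neg (show ¬ k ≤ D by omega), if_neg (show ¬ k + 1 ≤ D by omega),
              if_pos (show (k + D) % 2 = 1 by omega),
              if_neg (show ¬ (k + 1 + D) % 2 = 1 by omega)]
            exact hsymm _ _ h3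
      · intro k
        beta_reduce
        rcases Nat.mod_two_eq_zero_or_one k with he | he
        · rw [if_pos he, if_neg (show ¬ (k + 1) % 2 = 0 by omega)]
          exact hsymm _ _ h1
        · rw [if_neg (show ¬ k % 2 = 0 by omega), if_pos (show (k + 1) % 2 = 0 by omega)]
          exact h1
      · beta_reduce
        rw [if_pos (show (0:ℕ) % 2 = 0 by omega), if_pos (show D - 1 ≤ D by omega),
          if_pos (show (D - 1 + D) % 2 = 1 by omega)]
        exact h1
      · beta_reduce
        rw [if_pos (show (0:ℕ) % 2 = 0 by omega), if_neg (show ¬ D' - 1 ≤ D by omega),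
          if_pos (show (D' - 1 + D) % 2 = 1 by omega)]
        exact h4
    · -- D' < D
      refine ⟨fun k => if k ≤ D' then (if (k + D') % 2 = 1 then b else x)
          else (if (k + D') % 2 = 1 then a else x),
        fun k => if k % 2 = 0 then z else a, ?_, ?_, ?_, ?_⟩
      · intro k
        beta_reduce
        rcases Nat.mod_two_eq_zero_or_one (k + D') with he | he
        · by_cases hk : k < D'
          · rw [if_pos (show k ≤ D' by omega), if_pos (show k + 1 ≤ D' by omega),
              if_neg (show ¬ (k + D') % 2 = 1 by omega),
              if_pos (show (k + 1 + D') % 2 = 1 by omega)]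
            exact h3
          · by_cases hk2 : k = D'
            · rw [if_pos (show k ≤ D' by omega), if_neg (show ¬ k + 1 ≤ D' by omega),
                if_neg (show ¬ (k + D') % 2 = 1 by omega),
                if_pos (show (k + 1 + D') % 2 = 1 by omega)]
              exact hsymm _ _ h2
            · rw [if_neg (show ¬ k ≤ D' by omega), if_neg (show ¬ k + 1 ≤ D' by omega),
                if_neg (show ¬ (k + D') % 2 = 1 by omega),
                if_pos (show (k + 1 + D') % 2 = 1 by omega)]
              exact hsymm _ _ h2
        · by_cases hk : k < D'
          · rw [if_pos (show k ≤ D' by omega), if_pos (show k + 1 ≤ D' by omega),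
              if_pos (show (k + D') % 2 = 1 by omega),
              if_neg (show ¬ (k + 1 + D') % 2 = 1 by omega)]
            exact hsymm _ _ h3
          · rw [if_neg (show ¬ k ≤ D' by omega), if_neg (show ¬ k + 1 ≤ D' by omega),
              if_pos (show (k + D') % 2 = 1 by omega),
              if_neg (show ¬ (k + 1 + D') % 2 = 1 by omega)]
            exact h2
      · intro k
        beta_reduce
        rcases Nat.mod_two_eq_zero_or_one k with he | he
        · rw [if_pos he, if_neg (show ¬ (k + 1) % 2 = 0 by omega)]
          exact hsymm _ _ h1
        · rw [if_neg (show ¬ k % 2 = 0 by omega), if_pos (show (k + 1) % 2 = 0 by omega)]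
          exact h1
      · beta_reduce
        rw [if_pos (show (0:ℕ) % 2 = 0 by omega), if_neg (show ¬ D - 1 ≤ D' by omega),
          if_pos (show (D - 1 + D') % 2 = 1 by omega)]
        exact h1
      · beta_reduce
        rw [if_pos (show (0:ℕ) % 2 = 0 by omega), if_pos (show D' - 1 ≤ D' by omega),
          if_pos (show (D' - 1 + D') % 2 = 1 by omega)]
        exact h4
  · -- opposite parity
    obtain ⟨z, a, b, h1, h2, h3⟩ := hodd
    refine ⟨fun k => if (k + D) % 2 = 1 then a else b,
      fun k => if k % 2 = 0 then z else a, ?_, ?_, ?_, ?_⟩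
    · intro k
      beta_reduce
      rcases Nat.mod_two_eq_zero_or_one (k + D) with he | he
      · rw [if_neg (show ¬ (k + D) % 2 = 1 by omega),
          if_pos (show (k + 1 + D) % 2 = 1 by omega)]
        exact hsymm _ _ h2
      · rw [if_pos (show (k + D) % 2 = 1 by omega),
          if_neg (show ¬ (k + 1 + D) % 2 = 1 by omega)]
        exact h2
    · intro k
      beta_reduce
      rcases Nat.mod_two_eq_zero_or_one k with he | he
      · rw [if_pos he, if_neg (show ¬ (k + 1) % 2 = 0 by omega)]
        exact hsymm _ _ h1
      · rw [if_neg (show ¬ k % 2 = 0 by omega), if_pos (show (k + 1) % 2 = 0 by omega)]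
        exact h1
    · beta_reduce
      rw [if_pos (show (0:ℕ) % 2 = 0 by omega), if_pos (show (D - 1 + D) % 2 = 1 by omega)]
      exact h1
    · beta_reduce
      rw [if_pos (show (0:ℕ) % 2 = 0 by omega), if_neg (show ¬ (D' - 1 + D) % 2 = 1 by omega)]
      exact h3

section GraphAux

variable {V : Type*} {E : V → V → Prop}

lemma reach_symm (hsymm : ∀ u v, E u v → E v u) {x y : V} (h : Reach E x y) :
    Reach E y x :=
  by
  induction h with
  | refl => exact Relation.ReflTransGen.refl
  | tail _ hab ih => exact Relation.ReflTransGen.head (hsymm _ _ hab) ih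

lemma mem_scc_self (v : V) : v ∈ scc E v :=
  ⟨Relation.ReflTransGen.refl, Relation.ReflTransGen.refl⟩

lemma mem_scc_of_reach (hsymm : ∀ u v, E u v → E v u) {v u w : V}
    (hu : u ∈ scc E v) (h : Reach E u w) : w ∈ scc E v :=
  ⟨Relation.ReflTransGen.trans (reach_symm hsymm h) hu.1,
   Relation.ReflTransGen.trans hu.2 h⟩

lemma reach_of_both (hsymm : ∀ u v, E u v → E v u) {v x y : V}
    (hx : x ∈ scc E v) (hy : y ∈ scc E v) : Reach E x y :=
  Relation.ReflTransGen.trans hx.1 (reach_symm hsymm hy.1)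

lemma walk_of_reach {x y : V} (h : Reach E x y) :
    ∃ (m : ℕ) (w : ℕ → V), w 0 = x ∧ w m = y ∧ ∀ j < m, E (w j) (w (j + 1)) := by
  induction h with
  | refl => exact ⟨0, fun _ => x, rfl, rfl, by omega⟩
  | @tail b c hreach hedge ih =>
    obtain ⟨m, w, h0, hm, hw⟩ := ih
    refine ⟨m + 1, fun j => if j ≤ m then w j else c, by simpa using h0, ?_, ?_⟩
    · simp
    · intro j hj
      beta_reduce
      by_cases hjm : j < m
      · rw [if_pos (show j ≤ m by omega), if_pos (show j + 1 ≤ m by omega)]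
        exact hw j hjm
      · have hjeq : j = m := by omega
        subst hjeq
        rw [if_pos le_rfl, if_neg (show ¬ j + 1 ≤ j by omega), hm]
        exact hedge

lemma exists_neighbor (hsymm : ∀ u v, E u v → E v u) {v : V}
    (hv1 : ¬ (scc E v = {v} ∧ ¬ E v v)) {u : V} (hu : u ∈ scc E v) : ∃ w, E u w := by
  rcases Relation.ReflTransGen.cases_head hu.1 with heq | ⟨w, hw, -⟩
  · subst heq
    by_cases hvv : E u u
    · exact ⟨u, hvv⟩
    · have hne : scc E u ≠ {u} := fun hK => hv1 ⟨hK, hvv⟩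
      have hex : ∃ u', u' ∈ scc E u ∧ u' ≠ u := by
        by_contra hc
        push_neg at hc
        exact hne (Set.eq_singleton_iff_unique_mem.mpr ⟨mem_scc_self u, hc⟩)
      obtain ⟨u', hu', hne'⟩ := hex
      rcases Relation.ReflTransGen.cases_head hu'.2 with heq | ⟨w, hw, -⟩
      · exact absurd heq.symm hne'
      · exact ⟨w, hw⟩
  · exact ⟨w, hw⟩

lemma odd_aux (E : V → V → Prop) :
    ∀ m : ℕ, ∀ w : ℕ → V, (∀ j < m, E (w j) (w (j + 1))) → ¬ E (w 0) (w m) →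
      w 0 = w m ∨ ∃ a b c : V, E a b ∧ E b c ∧ ¬ E a c := by
  intro m
  induction m using Nat.strong_induction_on with
  | _ m ih =>
    intro w hw hne
    match m with
    | 0 => exact Or.inl rfl
    | 1 => exact absurd (hw 0 (by omega)) hne
    | (m + 2) =>
      by_cases h02 : E (w 0) (w 2)
      · have hrec := ih (m + 1) (by omega) (fun j => if j = 0 then w 0 else w (j + 1)) ?_ ?_
        · rcases hrec with heq | hgad
          · left
            simpa using heq
          · exact Or.inr hgad
        · intro j hj
          beta_reduce
          by_cases hj0 : j = 0
          · subst hj0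
            simpa using h02
          · rw [if_neg hj0, if_neg (show ¬ j + 1 = 0 by omega)]
            exact hw (j + 1) (by omega)
        · simpa using hne
      · exact Or.inr ⟨w 0, w 1, w 2, hw 0 (by omega), hw 1 (by omega), h02⟩

lemma odd_tuple (hsymm : ∀ u v, E u v → E v u) {v : V}
    (hv1 : ¬ (scc E v = {v} ∧ ¬ E v v))
    (hv2 : ¬ ∀ x ∈ scc E v, ∀ y ∈ scc E v, E x y) :
    ∃ z a b : V, E a z ∧ E a b ∧ ¬ E b z := by
  push_neg at hv2
  obtain ⟨x, hx, y, hy, hxy⟩ := hv2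
  obtain ⟨m, w, h0, hm, hw⟩ := walk_of_reach (reach_of_both hsymm hx hy)
  have hne : ¬ E (w 0) (w m) := by rw [h0, hm]; exact hxy
  rcases odd_aux E m w hw hne with heq | ⟨α, β, γ, h1, h2, h3⟩
  · have hyx : y = x := by rw [← h0, ← hm, heq]
    have hxx : ¬ E x x := by rwa [hyx] at hxy
    obtain ⟨β, hb⟩ := exists_neighbor hsymm hv1 hx
    exact ⟨x, β, x, hsymm _ _ hb, hsymm _ _ hb, hxx⟩
  · exact ⟨γ, β, α, h2, hsymm _ _ h1, h3⟩

lemma even_tuple (hsymm : ∀ u v, E u v → E v u) {v : V}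
    (hv1 : ¬ (scc E v = {v} ∧ ¬ E v v))
    (hv2 : ¬ ∀ x ∈ scc E v, ∀ y ∈ scc E v, E x y)
    (hv3 : ¬ IsCompleteBipartiteOn E (scc E v)) :
    ∃ z a x b : V, E a z ∧ E a x ∧ E x b ∧ ¬ E b z := by
  by_contra hc
  push_neg at hc
  -- hc : ∀ z a x b, E a z → E a x → E x b → E b z
  by_cases hloop : ∃ ω ∈ scc E v, E ω ω
  · obtain ⟨ω, hωK, hωω⟩ := hloop
    have S1 : ∀ u, Reach E ω u → E u u := by
      intro u hr
      induction hr with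
      | refl => exact hωω
      | @tail b u hreach hedge ih => exact hc u b b u hedge ih hedge
    have S2 : ∀ u ∈ scc E v, ∀ u', Reach E u u' → E u u' := by
      intro u hu u' hr
      induction hr with
      | refl => exact S1 u (reach_of_both hsymm hωK hu)
      | @tail b u' hreach hedge ih =>
        have hbb : E b b := S1 b (reach_of_both hsymm hωK (mem_scc_of_reach hsymm hu hreach))
        exact hsymm _ _ (hc u b b u' (hsymm _ _ ih) hbb hedge)
    push_neg at hv2
    obtain ⟨x, hx, y, hy, hxy⟩ := hv2
    exact hxy (S2 x hx y (reach_of_both hsymm hx hy))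
  · push_neg at hloop
    have hvK : v ∈ scc E v := mem_scc_self v
    have hKne : scc E v ≠ {v} := by
      intro hK
      have hvv : E v v := by
        by_contra hvv
        exact hv1 ⟨hK, hvv⟩
      exact hloop v hvK hvv
    have hex : ∃ u', u' ∈ scc E v ∧ u' ≠ v := by
      by_contra hcc
      push_neg at hcc
      exact hKne (Set.eq_singleton_iff_unique_mem.mpr ⟨hvK, hcc⟩)
    obtain ⟨u', hu', hu'v⟩ := hex
    obtain ⟨q, hvq, -⟩ : ∃ w, E v w ∧ Reach E w u' := by
      rcases Relation.ReflTransGen.cases_head hu'.2 with heq | h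
      · exact absurd heq.symm hu'v
      · exact h
    have hqK : q ∈ scc E v := mem_scc_of_reach hsymm hvK (Relation.ReflTransGen.single hvq)
    have cover : ∀ u', Reach E v u' → E v u' ∨ E q u' := by
      intro u' hr
      induction hr with
      | refl => exact Or.inr (hsymm _ _ hvq)
      | @tail b u' hreach hedge ih =>
        rcases ih with h | h
        · exact Or.inr (hsymm _ _ (hc q v b u' hvq h hedge))
        · exact Or.inl (hsymm _ _ (hc v q b u' (hsymm _ _ hvq) h hedge))
    apply hv3
    refine ⟨{u | u ∈ scc E v ∧ E q u}, {u | u ∈ scc E v ∧ E v u},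
      ⟨v, hvK, hsymm _ _ hvq⟩, ⟨q, hqK, hvq⟩, ?_, ?_, ?_⟩
    · ext u
      simp only [Set.mem_union, Set.mem_setOf_eq]
      constructor
      · rintro (⟨h, -⟩ | ⟨h, -⟩) <;> exact h
      · intro hu
        rcases cover u (reach_of_both hsymm hvK hu) with h | h
        · exact Or.inr ⟨hu, h⟩
        · exact Or.inl ⟨hu, h⟩
    · apply Set.eq_empty_iff_forall_notMem.mpr
      rintro u ⟨⟨huK, hqu⟩, -, hvu⟩
      exact hloop u huK (hc u q v u hqu (hsymm _ _ hvq) hvu)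
    · intro x hx y hy
      constructor
      · intro hxy
        rcases cover x (reach_of_both hsymm hvK hx) with h | h
        · exact Or.inr ⟨⟨hx, h⟩, ⟨hy, hsymm _ _ (hc q v x y hvq h hxy)⟩⟩
        · exact Or.inl ⟨⟨hx, h⟩, ⟨hy, hsymm _ _ (hc v q x y (hsymm _ _ hvq) h hxy)⟩⟩
      · rintro (⟨⟨-, hqx⟩, -, hvy⟩ | ⟨⟨-, hvx⟩, -, hqy⟩)
        · exact hsymm _ _ (hc x q v y hqx (hsymm _ _ hvq) hvy)
        · exact hsymm _ _ (hc x v q y hvx hvq hqy)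

end GraphAux

/-- Conversion of a bracketing to a `Tree Unit` (leaf ↦ nil). -/
def toT : BTree → Tree Unit
  | .leaf => Tree.nil
  | .node l r => Tree.node () (toT l) (toT r)

/-- Inverse conversion. -/
def ofT : Tree Unit → BTree
  | BinaryTree.nil => .leaf
  | BinaryTree.node _ l r => .node (ofT l) (ofT r)

lemma toT_ofT : ∀ x : Tree Unit, toT (ofT x) = x
  | BinaryTree.nil => rfl
  | BinaryTree.node _ l r => by
    simp [ofT, toT, toT_ofT l, toT_ofT r]

lemma ofT_toT : ∀ t : BTree, ofT (toT t) = t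
  | .leaf => rfl
  | .node l r => by
    simp [ofT, toT, ofT_toT l, ofT_toT r]

lemma numNodes_toT : ∀ t : BTree, (toT t).numNodes + 1 = t.size
  | .leaf => rfl
  | .node l r => by
    simp only [toT, BinaryTree.numNodes, BTree.size]
    have := numNodes_toT l
    have := numNodes_toT r
    dsimp only [Tree.numNodes] at *
    omega

lemma card_btree (n : ℕ) (hn : 1 ≤ n) :
    Nat.card {t : BTree // t.size = n} = catalan (n - 1) := by
  have e : {t : BTree // t.size = n} ≃ {x : Tree Unit // x.numNodes = n - 1} :=
    { toFun := fun t => ⟨toT t.1, by have := numNodes_toT t.1; have := t.2; omega⟩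
      invFun := fun x => ⟨ofT x.1, by
        have h := numNodes_toT (ofT x.1)
        rw [toT_ofT] at h
        have := x.2
        omega⟩
      left_inv := fun t => Subtype.ext (ofT_toT t.1)
      right_inv := fun x => Subtype.ext (toT_ofT x.1) }
  rw [Nat.card_congr e,
    Nat.card_congr (Equiv.subtypeEquivRight
      (fun x : Tree Unit => (BinaryTree.mem_treesOfNumNodesEq (x := x) (n := n - 1)).symm)),
    Nat.card_eq_finsetCard, BinaryTree.treesOfNumNodesEq_card_eq_catalan]

end Aux

end AssocSpec
open AssocSpec in
/-- If an undirected graph `G` has a connected component that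
is neither trivial, nor a complete graph with loops, nor complete bipartite,
then `A(G)` satisfies no nontrivial bracketing identity; consequently
`s_n(A(G)) = C_{n-1}` (Catalan number) for all `n ≥ 1`. -/
theorem stmt2 {V : Type*} [Nonempty V] (E : V → V → Prop)
    (hsymm : ∀ u v, E u v → E v u)
    (hbad : ∃ v : V,
      ¬ (scc E v = {v} ∧ ¬ E v v) ∧
      ¬ (∀ x ∈ scc E v, ∀ y ∈ scc E v, E x y) ∧
      ¬ IsCompleteBipartiteOn E (scc E v)) :
    (∀ t t' : BTree, t.size = t'.size → t ≠ t' → ¬ Satisfies (gaOp E) t t') ∧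
    (∀ n : ℕ, 1 ≤ n → spectrum (gaOp E) n = catalan (n - 1)) := by
  classical
  obtain ⟨v, hv1, hv2, hv3⟩ := hbad
  have hodd := AssocSpec.odd_tuple hsymm hv1 hv2
  have heven := AssocSpec.even_tuple hsymm hv1 hv2 hv3
  have gad := AssocSpec.gad_of_tuples E hsymm hodd heven
  have part1 : ∀ t t' : BTree, t.size = t'.size → t ≠ t' → ¬ Satisfies (gaOp E) t t' := by
    intro t t' hs hne hsat
    obtain ⟨g, hg1, hg2⟩ := AssocSpec.key_exists E gad t t' hs hne
    have h1 := AssocSpec.evalFrom_some E g t 0 hg1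
    have h2 := AssocSpec.evalFrom_none E g t' 0 hg2
    have heq := hsat (fun j => some (g j))
    rw [BTree.termOp, BTree.termOp, h1, h2] at heq
    simp at heq
  refine ⟨part1, ?_⟩
  intro n hn
  have hinj : Function.Injective
      (fun t : {t : BTree // t.size = n} => BTree.termOp (gaOp E) t.1) := by
    intro t₁ t₂ h
    apply Subtype.ext
    by_contra hne
    exact part1 t₁.1 t₂.1 (by rw [t₁.2, t₂.2]) hne (fun f => congrFun h f)
  have hset : {g : (ℕ → Option V) → Option V |
        ∃ t : BTree, t.size = n ∧ g = BTree.termOp (gaOp E) t} =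
      Set.range (fun t : {t : BTree // t.size = n} => BTree.termOp (gaOp E) t.1) := by
    ext g
    simp only [Set.mem_setOf_eq, Set.mem_range, Subtype.exists]
    constructor
    · rintro ⟨t, ht, rfl⟩
      exact ⟨t, ht, rfl⟩
    · rintro ⟨t, ht, rfl⟩
      exact ⟨t, ht, rfl⟩
  rw [AssocSpec.spectrum, hset, ← Nat.card_coe_set_eq, Nat.card_range_of_injective hinj,
    AssocSpec.card_btree n hn]
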